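/- Let (L, ∗, α) be a left Hom-Leibniz superalgebra and define the supercommutator [x,y] := x∗y − (−1)^{|x||y|} y∗x. Then the bracket [,] satisfies the Hom-super-Jacobi identity ↻_{(x,y,z)}(−1)^{|x||z|}[[x,y],α(z)] = 0 for all homogeneous x, y, z ∈ L if and only if ↻_{(x,y,z)}(−1)^{|x||z|}(x∗y)∗α(z) = 0 for all homogeneous x, y, z ∈ L, where ↻_{(x,y,z)}(−1)^{|x||z|}F(x,y,z) denotes the graded cyclic sum (−1)^{|x||z|}F(x,y,z) + (−1)^{|y||x|}F(y,z,x) + (−1)^{|z||y|}F(z,x,y). -/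
import Mathlib


/-- A (multiplicative) Hom-superalgebra: a `ℤ/2`-graded `K`-vector space `L = L₀ ⊕ L₁`
with a parity-respecting bilinear operation `op` and an even multiplicative linear map `map`. -/
structure HomSuperalgebra (K : Type*) [Field K] (L : Type*) [AddCommGroup L] [Module K L] where
  grading : ZMod 2 → Submodule K L
  internal : DirectSum.IsInternal grading
  op : L →ₗ[K] L →ₗ[K] L
  op_mem : ∀ {i j : ZMod 2} {x y : L}, x ∈ grading i → y ∈ grading j → op x y ∈ grading (i + j)
  map : L →ₗ[K] L
  map_even : ∀ {i : ZMod 2} {x : L}, x ∈ grading i → map x ∈ grading i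
  map_op : ∀ x y : L, map (op x y) = op (map x) (map y)

namespace HomSuperalgebra

variable {K : Type*} [Field K] {L : Type*} [AddCommGroup L] [Module K L]

/-- The sign `(−1)^{ij}` attached to parities `i, j`. -/
def sgn (K : Type*) [Field K] (i j : ZMod 2) : K := (-1 : K) ^ (i.val * j.val)

/-- The supercommutator `[x,y] := x∗y − (−1)^{|x||y|} y∗x` of homogeneous elements
of parities `i` and `j`. -/
def br (A : HomSuperalgebra K L) (i j : ZMod 2) (x y : L) : L :=
  A.op x y - sgn K i j • A.op y x

/-- The Hom-associator `as_α(x,y,z) := (x∗y)∗α(z) − α(x)∗(y∗z)`. -/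
def assoc (A : HomSuperalgebra K L) (x y z : L) : L :=
  A.op (A.op x y) (A.map z) - A.op (A.map x) (A.op y z)

/-- The ternary operation `{x,y,z} := −(x∗y)∗α(z)`. -/
def trip (A : HomSuperalgebra K L) (x y z : L) : L :=
  -(A.op (A.op x y) (A.map z))

/-- The left Hom-Leibniz superidentity:
`α(x)∗(y∗z) = (x∗y)∗α(z) + (−1)^{|x||y|} α(y)∗(x∗z)` for homogeneous `x, y, z`. -/
def IsLeftLeibniz (A : HomSuperalgebra K L) : Prop :=
  ∀ (i j k : ZMod 2) (x y z : L),
    x ∈ A.grading i → y ∈ A.grading j → z ∈ A.grading k →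
      A.op (A.map x) (A.op y z)
        = A.op (A.op x y) (A.map z) + sgn K i j • A.op (A.map y) (A.op x z)

end HomSuperalgebra

open HomSuperalgebra

variable {K : Type*} [Field K] {L : Type*} [AddCommGroup L] [Module K L]


private theorem homSuperLie_key (A : HomSuperalgebra K L) (hL : A.IsLeftLeibniz)
    (i j k : ZMod 2) (x y z : L)
    (hx : x ∈ A.grading i) (hy : y ∈ A.grading j) (hz : z ∈ A.grading k) :
    sgn K i k • A.br (i + j) k (A.br i j x y) (A.map z)
      + sgn K j i • A.br (j + k) i (A.br j k y z) (A.map x)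
      + sgn K k j • A.br (k + i) j (A.br k i z x) (A.map y)
    = sgn K i k • A.op (A.op x y) (A.map z)
      + sgn K j i • A.op (A.op y z) (A.map x)
      + sgn K k j • A.op (A.op z x) (A.map y) := by
  have h1 := hL j i k y x z hy hx hz
  have h2 := hL i k j x z y hx hz hy
  have h3 := hL k j i z y x hz hy hx
  have hm : ∀ m : ZMod 2, m = 0 ∨ m = 1 := by decide
  simp only [br, map_sub, map_smul, LinearMap.sub_apply, LinearMap.smul_apply] at *
  rcases hm i with rfl | rfl <;> rcases hm j with rfl | rfl <;> rcases hm k with rfl | rfl <;>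
    norm_num [sgn, show ((0:ZMod 2).val = 0) from rfl, show ((1:ZMod 2).val = 1) from rfl,
      show ((1:ZMod 2)+1 = 0) from rfl, show ((0:ZMod 2)+1 = 1) from rfl,
      show ((1:ZMod 2)+0 = 1) from rfl, show ((0:ZMod 2)+0 = 0) from rfl,
      show ((2:ZMod 2).val = 0) from rfl, show ((2:ZMod 2) = 0) from rfl] at *
  · linear_combination (norm := module) h1 + h2 + h3
  · linear_combination (norm := module) h1 + h2 + h3
  · linear_combination (norm := module) h1 + h2 + h3
  · linear_combination (norm := module) h1 - h2 - h3
  · linear_combination (norm := module) h1 + h2 + h3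
  · linear_combination (norm := module) -h1 - h2 + h3
  · linear_combination (norm := module) -h1 + h2 - h3
  · linear_combination (norm := module) h1 + h2 + h3

/-- a left Hom-Leibniz superalgebra is Hom-super Lie admissible (its
supercommutator satisfies the Hom-super-Jacobi identity) iff
`↻ (−1)^{|x||z|}(x∗y)∗α(z) = 0` for all homogeneous `x, y, z`. -/
theorem homSuperLie_admissible_iff (A : HomSuperalgebra K L) (hL : A.IsLeftLeibniz) :
    (∀ (i j k : ZMod 2) (x y z : L),
      x ∈ A.grading i → y ∈ A.grading j → z ∈ A.grading k →
        sgn K i k • A.br (i + j) k (A.br i j x y) (A.map z)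
          + sgn K j i • A.br (j + k) i (A.br j k y z) (A.map x)
          + sgn K k j • A.br (k + i) j (A.br k i z x) (A.map y) = 0)
    ↔ (∀ (i j k : ZMod 2) (x y z : L),
      x ∈ A.grading i → y ∈ A.grading j → z ∈ A.grading k →
        sgn K i k • A.op (A.op x y) (A.map z)
          + sgn K j i • A.op (A.op y z) (A.map x)
          + sgn K k j • A.op (A.op z x) (A.map y) = 0) := by
  constructor
  · intro H i j k x y z hx hy hz
    exact (homSuperLie_key A hL i j k x y z hx hy hz).symm.trans (H i j k x y z hx hy hz)
  · intro H i j k x y z hx hy hz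
    exact (homSuperLie_key A hL i j k x y z hx hy hz).trans (H i j k x y z hx hy hz)
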